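/- Counterexample to commutation of knowledge with unfolding: let M be the one-agent system with states {1,2,3}, initial state 1, transitions 1→2, 2→1, 1→3, 3→3, all states labeled with the single observable proposition p_1. Then with S = {1,3}, the preimage under the last-state map t_M of the finitary knowledge set K_a^f(S) = {1} is strictly contained in K_a(t_M^{-1}(S)); specifically K_a(t_M^{-1}(S)) additionally contains the tree nodes ending in state 3 at odd depth. -/

import Mathlib

/-- Transitions of the counterexample system: states `0,1,2` (for `1,2,3` of the paper),
transitions `1→2, 2→1, 1→3, 3→3`. -/
def d3 : Fin 3 → Fin 3 → Prop := fun q r =>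
  (q = 0 ∧ r = 1) ∨ (q = 1 ∧ r = 0) ∨ (q = 0 ∧ r = 2) ∨ (q = 2 ∧ r = 2)

namespace Stmt18Aux

def alt : ℕ → List (Fin 3)
  | 0 => []
  | 1 => [1]
  | n+2 => 1 :: 0 :: alt n

lemma alt_length : ∀ n, (alt n).length = n
  | 0 => rfl
  | 1 => rfl
  | n+2 => by simp [alt, alt_length n]

lemma alt_chain : ∀ n, List.Chain d3 0 (alt n)
  | 0 => List.Chain.nil
  | 1 => List.Chain.cons (Or.inl ⟨rfl, rfl⟩) List.Chain.nil
  | n+2 => List.Chain.cons (Or.inl ⟨rfl, rfl⟩)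
      (List.Chain.cons (Or.inr (Or.inl ⟨rfl, rfl⟩)) (alt_chain n))

lemma alt_last : ∀ n, ((0 : Fin 3) :: alt n).getLast (List.cons_ne_nil _ _)
    = if Even n then 0 else 1
  | 0 => by simp [alt]
  | 1 => by simp [alt, List.getLast]
  | n+2 => by
      have h := alt_last n
      show ((0 : Fin 3) :: 1 :: 0 :: alt n).getLast (List.cons_ne_nil _ _) = _
      rw [List.getLast_cons (List.cons_ne_nil _ _), List.getLast_cons (List.cons_ne_nil _ _)]
      rw [h]
      simp [Nat.even_add_one, Nat.even_add]

def twos : ℕ → List (Fin 3) := fun n => 2 :: List.replicate n 2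

lemma twos_length (n : ℕ) : (twos n).length = n + 1 := by simp [twos]

lemma chain_rep : ∀ n, List.Chain d3 2 (List.replicate n 2)
  | 0 => List.Chain.nil
  | n+1 => List.Chain.cons (Or.inr (Or.inr (Or.inr ⟨rfl, rfl⟩))) (chain_rep n)

lemma twos_chain (n : ℕ) : List.Chain d3 0 (twos n) :=
  List.Chain.cons (Or.inr (Or.inr (Or.inl ⟨rfl, rfl⟩))) (chain_rep n)

lemma last_rep : ∀ n, ((2 : Fin 3) :: List.replicate n 2).getLast (List.cons_ne_nil _ _) = 2
  | 0 => rfl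
  | n+1 => by
      rw [List.replicate_succ, List.getLast_cons (List.cons_ne_nil _ _)]
      exact last_rep n

lemma twos_last (n : ℕ) : ((0 : Fin 3) :: twos n).getLast (List.cons_ne_nil _ _) = 2 := by
  show ((0:Fin 3) :: 2 :: List.replicate n 2).getLast (List.cons_ne_nil _ _) = 2
  rw [List.getLast_cons (List.cons_ne_nil _ _)]
  exact last_rep n

lemma parity (l : List (Fin 3)) (hc : List.Chain d3 0 l) :
    (((0:Fin 3)::l).getLast (List.cons_ne_nil _ _) = 0 → Even l.length) ∧
    (((0:Fin 3)::l).getLast (List.cons_ne_nil _ _) = 1 → Odd l.length) ∧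
    (((0:Fin 3)::l).getLast (List.cons_ne_nil _ _) = 2 → l ≠ []) := by
  induction l using List.reverseRecOn with
  | nil =>
      refine ⟨fun _ => Even.zero, fun h => ?_, fun h => ?_⟩
      · exact absurd h (by decide)
      · exact absurd h (by decide)
  | append_singleton l b IH =>
      have hc' : List.Chain' d3 (((0:Fin 3) :: l) ++ [b]) := hc
      rw [show List.Chain' d3 (((0:Fin 3) :: l) ++ [b]) = List.IsChain d3 (((0:Fin 3) :: l) ++ [b]) from rfl, List.isChain_append] at hc'
      obtain ⟨h1, _, h3⟩ := hc'
      have hl : List.Chain d3 0 l := h1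
      have hd : d3 (((0:Fin 3)::l).getLast (List.cons_ne_nil _ _)) b := by
        apply h3
        · simp [List.getLast?_eq_getLast]
        · rfl
      have hlast : (((0:Fin 3) :: (l ++ [b])).getLast (List.cons_ne_nil _ _)) = b :=
        List.getLast_concat (l := (0:Fin 3) :: l)
      obtain ⟨IH0, IH1, IH2⟩ := IH hl
      rw [hlast]
      simp only [List.length_append, List.length_singleton]
      rcases hd with ⟨ha, hb⟩ | ⟨ha, hb⟩ | ⟨ha, hb⟩ | ⟨ha, hb⟩
      · refine ⟨fun h => absurd (hb ▸ h) (by decide), fun _ => ?_, fun h => absurd (hb ▸ h) (by decide)⟩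
        exact (IH0 ha).add_one
      · refine ⟨fun _ => ?_, fun h => absurd (hb ▸ h) (by decide), fun h => absurd (hb ▸ h) (by decide)⟩
        exact (IH1 ha).add_one
      · exact ⟨fun h => absurd (hb ▸ h) (by decide), fun h => absurd (hb ▸ h) (by decide),
          fun _ => by simp⟩
      · exact ⟨fun h => absurd (hb ▸ h) (by decide), fun h => absurd (hb ▸ h) (by decide),
          fun _ => by simp⟩

end Stmt18Aux

/-- Counterexample to commutation of knowledge with unfolding. In the one-agent
system above with all states carrying the single observable proposition, for `S = {1,3}`
(here `{0,2}`): `t_M⁻¹(K_a^f(S))` is exactly the runs ending in state `1`, while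
`K_a(t_M⁻¹(S))` additionally contains exactly the runs ending in state `3` of odd length
(runs counted including the initial state), so the former is strictly contained in the
latter. -/
theorem stmt18 :
    let lab : Fin 3 → Set Unit := fun _ => Set.univ
    let Pa : Set Unit := Set.univ
    let Node := {x : List (Fin 3) // List.Chain d3 0 x}
    let lastSt : Node → Fin 3 := fun x => ((0 : Fin 3) :: x.val).getLast (List.cons_ne_nil _ _)
    let obsRun : List (Fin 3) → List (Set Unit) :=
      fun ρ => ((0 : Fin 3) :: ρ).map (fun q => lab q ∩ Pa)
    let sim : Node → Node → Prop := fun x y => obsRun x.val = obsRun y.val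
    let Gamma : Fin 3 → Fin 3 → Prop := fun s q =>
      ∀ x : Node, lastSt x = s → ∃ y : Node, sim x y ∧ lastSt y = q
    let Kf : Set (Fin 3) → Set (Fin 3) := fun S => {q | ∀ s, Gamma s q → s ∈ S}
    let Kt : Set Node → Set Node := fun T => {x | ∀ y : Node, sim x y → y ∈ T}
    let S : Set (Fin 3) := {0, 2}
    lastSt ⁻¹' (Kf S) = {x : Node | lastSt x = 0} ∧
    Kt (lastSt ⁻¹' S) =
      {x : Node | lastSt x = 0 ∨ (lastSt x = 2 ∧ Odd (x.val.length + 1))} ∧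
    lastSt ⁻¹' (Kf S) ⊂ Kt (lastSt ⁻¹' S) := by
  intro lab Pa Node lastSt obsRun sim Gamma Kf Kt S
  -- sim is just "equal length"
  have hsim : ∀ x y : Node, sim x y ↔ x.val.length = y.val.length := by
    intro x y
    constructor
    · intro h
      have := congrArg List.length h
      simpa [obsRun] using this
    · intro h
      show obsRun x.val = obsRun y.val
      simp only [obsRun, lab, Pa, Set.univ_inter]
      rw [List.map_const', List.map_const']
      simp [h]
  have h3 : ∀ q : Fin 3, q = 0 ∨ q = 1 ∨ q = 2 := by decide
  have hS : ∀ q : Fin 3, q ∈ S ↔ (q = 0 ∨ q = 2) := by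
    intro q; simp [S]
  have hpar : ∀ x : Node,
      (lastSt x = 0 → Even x.val.length) ∧
      (lastSt x = 1 → Odd x.val.length) ∧
      (lastSt x = 2 → x.val ≠ []) := fun x => Stmt18Aux.parity x.val x.prop
  have altNode : ∀ n : ℕ, ∃ y : Node, y.val.length = n ∧
      lastSt y = if Even n then 0 else 1 := by
    intro n
    exact ⟨⟨Stmt18Aux.alt n, Stmt18Aux.alt_chain n⟩, Stmt18Aux.alt_length n,
      Stmt18Aux.alt_last n⟩
  have twosNode : ∀ n : ℕ, ∃ y : Node, y.val.length = n + 1 ∧ lastSt y = 2 := by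
    intro n
    exact ⟨⟨Stmt18Aux.twos n, Stmt18Aux.twos_chain n⟩, Stmt18Aux.twos_length n,
      Stmt18Aux.twos_last n⟩
  have hG11 : Gamma 1 1 := fun x hx => ⟨x, (hsim x x).2 rfl, hx⟩
  have hG12 : Gamma 1 2 := by
    intro x hx
    have hodd : Odd x.val.length := (hpar x).2.1 hx
    obtain ⟨m, hm⟩ := hodd
    obtain ⟨y, hy1, hy2⟩ := twosNode (2 * m)
    exact ⟨y, (hsim x y).2 (by omega), hy2⟩
  have hG10 : ¬ Gamma 1 0 := by
    intro h
    obtain ⟨y, hy1, hy2⟩ :=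
      h ⟨[1], List.Chain.cons (Or.inl ⟨rfl, rfl⟩) List.Chain.nil⟩ rfl
    obtain ⟨k, hk⟩ := (hpar y).1 hy2
    have hlen : (1 : ℕ) = y.val.length := (hsim _ _).1 hy1
    omega
  -- first equality
  have h1 : lastSt ⁻¹' (Kf S) = {x : Node | lastSt x = 0} := by
    ext x
    simp only [Set.mem_preimage, Set.mem_setOf_eq]
    constructor
    · intro hx
      rcases h3 (lastSt x) with h | h | h
      · exact h
      · exact absurd ((hS 1).1 (hx 1 (h ▸ hG11))) (by decide)
      · exact absurd ((hS 1).1 (hx 1 (h ▸ hG12))) (by decide)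
    · intro hx s hGs
      rw [hx] at hGs
      rcases h3 s with h | h | h
      · rw [hS]; left; exact h
      · exact absurd (h ▸ hGs) hG10
      · rw [hS]; right; exact h
  -- second equality
  have h2 : Kt (lastSt ⁻¹' S) =
      {x : Node | lastSt x = 0 ∨ (lastSt x = 2 ∧ Odd (x.val.length + 1))} := by
    ext x
    simp only [Set.mem_setOf_eq]
    constructor
    · intro hx
      have hx0 : lastSt x ∈ S := hx x ((hsim x x).2 rfl)
      rcases (hS _).1 hx0 with h | h
      · exact Or.inl h
      · refine Or.inr ⟨h, ?_⟩
        rcases Nat.even_or_odd x.val.length with he | ho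
        · exact he.add_one
        · exfalso
          obtain ⟨y, hy1, hy2⟩ := altNode x.val.length
          rw [if_neg (Nat.not_even_iff_odd.mpr ho)] at hy2
          have hyS : lastSt y ∈ S := hx y ((hsim x y).2 hy1.symm)
          rw [hy2] at hyS
          exact absurd ((hS 1).1 hyS) (by decide)
    · intro hx y hy
      have heven : Even x.val.length := by
        rcases hx with h | ⟨_, hoddp⟩
        · exact (hpar x).1 h
        · obtain ⟨k, hk⟩ := hoddp; exact ⟨k, by omega⟩
      have hylen : y.val.length = x.val.length := ((hsim x y).1 hy).symm
      show lastSt y ∈ S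
      rcases h3 (lastSt y) with h | h | h
      · rw [hS]; left; exact h
      · exfalso
        obtain ⟨m, hm⟩ := (hpar y).2.1 h
        obtain ⟨k, hk⟩ := heven
        omega
      · rw [hS]; right; exact h
  refine ⟨h1, h2, ?_⟩
  rw [h1, h2, Set.ssubset_def]
  constructor
  · intro x hx
    exact Or.inl hx
  · intro hcon
    have hmem : (⟨Stmt18Aux.twos 1, Stmt18Aux.twos_chain 1⟩ : Node) ∈
        {x : Node | lastSt x = 0 ∨ (lastSt x = 2 ∧ Odd (x.val.length + 1))} :=
      Or.inr ⟨Stmt18Aux.twos_last 1, ⟨1, rfl⟩⟩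
    have := hcon hmem
    rw [Set.mem_setOf_eq] at this
    have h2' : lastSt (⟨Stmt18Aux.twos 1, Stmt18Aux.twos_chain 1⟩ : Node) = 2 :=
      Stmt18Aux.twos_last 1
    rw [this] at h2'
    exact absurd h2' (by decide)
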